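/- Let n ≥ 1 and let z = (z_{ij}^t) ∈ ℝ^{n³} with z ≥ 0 (indexed by i ∈ N, j ∈ V, t ∈ [n]) satisfy, for every i ∈ N, j ∈ V and t ∈ [n], the inequality Σ_{τ=t+1}^{n} Σ_{k∈N} z_{kj}^{τ} + n·z_{ij}^{t} ≤ 1. Then for every ad j ∈ V and every subset I ⊆ N of impression types, Σ_{t=1}^{n} Σ_{i∈I} z_{ij}^{t} ≤ 1 − (1 − |I|/n)^n. In other words, the time-indexed inequalities imply the right-star inequalities for the aggregated probabilities z_{ij} := Σ_{t=1}^{n} z_{ij}^{t}. -/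

import Mathlib

open Finset

/-- Standard basis vector `e_{k,j}^τ` of `ℝ^{n³}`: one in coordinate `(k,j,τ)`, zero elsewhere. -/
def stdBasisVec (n : ℕ) (k j τ : Fin n) : Fin n → Fin n → Fin n → ℝ :=
  fun a b c => if a = k ∧ b = j ∧ c = τ then 1 else 0

/-- Time-indexed matching probabilities `z_{ij}^t = Σ_{S ⊆ V∖{j}} x_{i,j}^{t,S}`
induced by policy variables `x`.  The stage `t : Fin n` encodes stage number `t.1 + 1`. -/
def obmZ (n : ℕ) (x : Fin n → Fin n → Fin n → Finset (Fin n) → ℝ) :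
    Fin n → Fin n → Fin n → ℝ :=
  fun i j t => ∑ S ∈ (Finset.univ.erase j).powerset, x i j t S

/-- Feasibility of policy variables `(x, y)` for the OBM policy LP.
A stage index `t : Fin n` encodes the stage number `t.1 + 1 ∈ [n]` (stages counted down),
so stage `n` is the index with `t.1 = n - 1`, stage `1` is the index with `t.1 = 0`, and
the stage `t + 1` following `t` corresponds to the index `⟨t.1 + 1, _⟩`. -/
def ObmFeasible (n : ℕ)
    (x : Fin n → Fin n → Fin n → Finset (Fin n) → ℝ)
    (y : Fin n → Fin n → Finset (Fin n) → ℝ) : Prop :=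
  (∀ i j t S, 0 ≤ x i j t S) ∧
  (∀ i t S, 0 ≤ y i t S) ∧
  -- (a)
  (∀ i tn : Fin n, tn.1 = n - 1 →
    ∑ j : Fin n, x i j tn (Finset.univ.erase j) + y i tn Finset.univ ≤ 1 / (n : ℝ)) ∧
  -- (b)
  (∀ t : Fin n, ∀ ht : t.1 + 1 < n, ∀ i : Fin n, ∀ S : Finset (Fin n),
    S.Nonempty → S ⊂ Finset.univ → t.1 + 1 ≤ S.card →
    ∑ j ∈ S, x i j t (S.erase j)
      + (if t.1 ≠ 0 then y i t S else 0)
      - (1 / (n : ℝ)) * (if t.1 + 1 < S.card then ∑ k : Fin n, y k ⟨t.1 + 1, ht⟩ S else 0)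
      - (1 / (n : ℝ)) * ∑ k : Fin n, ∑ j ∈ Finset.univ \ S, x k j ⟨t.1 + 1, ht⟩ S ≤ 0) ∧
  -- (c)
  (∀ t : Fin n, ∀ ht : t.1 + 1 < n, ∀ i : Fin n,
    ∑ j : Fin n, x i j t (Finset.univ.erase j)
      + (if t.1 ≠ 0 then y i t Finset.univ else 0)
      - (1 / (n : ℝ)) * ∑ k : Fin n, y k ⟨t.1 + 1, ht⟩ Finset.univ ≤ 0)

/-- The polytope `Q ⊆ ℝ^{n³}` of achievable time-indexed matching probabilities:
the projection of the feasible region of the OBM policy LP via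
`z_{ij}^t = Σ_{S ⊆ V∖{j}} x_{i,j}^{t,S}`. -/
def ObmQ (n : ℕ) : Set (Fin n → Fin n → Fin n → ℝ) :=
  { z | ∃ x y, ObmFeasible n x y ∧ z = obmZ n x }

/-- If `z ≥ 0` satisfies `Σ_{τ=t+1}^n Σ_{k∈N} z_{kj}^τ + n·z_{ij}^t ≤ 1` for
all `i, j, t`, then for every ad `j` and every `I ⊆ N`,
`Σ_{t=1}^n Σ_{i∈I} z_{ij}^t ≤ 1 − (1 − |I|/n)^n`:
the time-indexed inequalities imply the right-star inequalities. -/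
theorem time_indexed_implies_right_star (n : ℕ) (hn : 1 ≤ n)
    (z : Fin n → Fin n → Fin n → ℝ)
    (hz : ∀ i j t, 0 ≤ z i j t)
    (hineq : ∀ i j t : Fin n,
      (∑ τ ∈ Finset.Ioi t, ∑ k : Fin n, z k j τ) + (n : ℝ) * z i j t ≤ 1) :
    ∀ j : Fin n, ∀ I : Finset (Fin n),
      ∑ t : Fin n, ∑ i ∈ I, z i j t ≤ 1 - (1 - (I.card : ℝ) / n) ^ n := by
  intro j I
  have hn0 : (0:ℝ) < n := by exact_mod_cast hn
  set r : ℝ := (I.card : ℝ) / n with hrdef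
  have hr0 : 0 ≤ r := by positivity
  have hr1 : r ≤ 1 := by
    rw [hrdef, div_le_one hn0]
    exact_mod_cast (Finset.card_le_card (subset_univ I)).trans_eq (by simp)
  -- key pointwise bound
  have key : ∀ t : Fin n, ∑ i ∈ I, z i j t
      ≤ r * (1 - ∑ τ ∈ Finset.Ioi t, ∑ i ∈ I, z i j τ) := by
    intro t
    have hT : ∑ τ ∈ Finset.Ioi t, ∑ i ∈ I, z i j τ
        ≤ ∑ τ ∈ Finset.Ioi t, ∑ k : Fin n, z k j τ :=
      sum_le_sum fun τ _ => sum_le_sum_of_subset_of_nonneg (subset_univ I)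
        (fun k _ _ => hz k j τ)
    have h2 : (n:ℝ) * ∑ i ∈ I, z i j t
        ≤ (I.card : ℝ) * (1 - ∑ τ ∈ Finset.Ioi t, ∑ k : Fin n, z k j τ) := by
      rw [Finset.mul_sum]
      calc ∑ i ∈ I, (n:ℝ) * z i j t
          ≤ ∑ _i ∈ I, (1 - ∑ τ ∈ Finset.Ioi t, ∑ k : Fin n, z k j τ) :=
            sum_le_sum fun i _ => by linarith [hineq i j t]
        _ = (I.card : ℝ) * (1 - ∑ τ ∈ Finset.Ioi t, ∑ k : Fin n, z k j τ) := by
            rw [sum_const, nsmul_eq_mul]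
    have h3 : ∑ i ∈ I, z i j t
        ≤ r * (1 - ∑ τ ∈ Finset.Ioi t, ∑ k : Fin n, z k j τ) := by
      rw [hrdef, div_mul_eq_mul_div, le_div_iff₀ hn0]
      linarith
    refine h3.trans (mul_le_mul_of_nonneg_left (by linarith) hr0)
  -- adding the head element
  have step : ∀ t : Fin n, ∀ k : ℕ,
      ∑ τ ∈ Finset.Ioi t, ∑ i ∈ I, z i j τ ≤ 1 - (1 - r) ^ k →
      ∑ τ ∈ Finset.Ici t, ∑ i ∈ I, z i j τ ≤ 1 - (1 - r) ^ (k + 1) := by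
    intro t k hB
    rw [Finset.Ici_eq_cons_Ioi, Finset.sum_cons, pow_succ]
    have hk := key t
    have hp : (0:ℝ) ≤ (1 - r) ^ k := pow_nonneg (by linarith) k
    nlinarith [mul_le_mul_of_nonneg_left hB (by linarith : (0:ℝ) ≤ 1 - r)]
  -- downward induction on the tail
  have ioiB : ∀ k : ℕ, ∀ t : Fin n, (Finset.Ioi t).card = k →
      ∑ τ ∈ Finset.Ioi t, ∑ i ∈ I, z i j τ ≤ 1 - (1 - r) ^ k := by
    intro k
    induction k with
    | zero =>
      intro t ht
      rw [Finset.card_eq_zero.mp ht]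
      simp
    | succ k ih =>
      intro t ht
      have hcard : (Finset.Ioi t).card = n - 1 - t.1 := Fin.card_Ioi t
      have htn : t.1 + 1 < n := by omega
      set t' : Fin n := ⟨t.1 + 1, htn⟩ with ht'
      have hIoi : Finset.Ioi t = Finset.Ici t' := by
        ext τ
        simp only [Finset.mem_Ioi, Finset.mem_Ici, Fin.lt_def, Fin.le_def, ht', Fin.val_mk]
        omega
      have hcard' : (Finset.Ioi t').card = k := by
        rw [Fin.card_Ioi]; simp only [ht']; omega
      rw [hIoi]
      exact step t' k (ih t' hcard')
  -- conclude
  have h0 : (0 : ℕ) < n := hn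
  have huniv : (Finset.univ : Finset (Fin n)) = Finset.Ici (⟨0, h0⟩ : Fin n) := by
    ext τ; simp [Fin.le_def]
  have hc0 : (Finset.Ioi (⟨0, h0⟩ : Fin n)).card = n - 1 := by
    rw [Fin.card_Ioi]; simp
  have := step ⟨0, h0⟩ (n - 1) (ioiB (n - 1) ⟨0, h0⟩ hc0)
  rw [huniv]
  have hexp : n - 1 + 1 = n := by omega
  rwa [hexp] at this
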